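/- (Lemma 5.3, pointwise form) With the pointwise model of a submanifold of a quaternionic Kähler manifold below, assume P ∘ P = −cos²θ · id_W for some θ ∈ (0, π/2) (the proper slant condition) and that every vector of W^⊥ lies in the range of F (which holds for a proper slant submanifold of minimal codimension). Then ⟨Cu, Cv⟩ = cos²θ · ⟨u, v⟩ for all u, v ∈ W^⊥. -/

import Mathlib

open RealInnerProductSpace

/-- **Lemma 5.3 (pointwise form).** In the pointwise model of a `θ`-slant proper submanifold of
a quaternionic Kähler manifold, if moreover every normal vector lies in the range of `F`
(minimal codimension), then `⟪Cu, Cv⟫ = cos²θ · ⟪u, v⟫` for all `u, v ∈ W^⊥`. -/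
theorem pointwise_lemma53
    {V : Type*} [NormedAddCommGroup V] [InnerProductSpace ℝ V] [FiniteDimensional ℝ V]
    (J : V →ₗ[ℝ] V) (hJinner : ∀ x y : V, ⟪J x, J y⟫ = ⟪x, y⟫)
    (hJ2 : ∀ x : V, J (J x) = -x)
    (W : Submodule ℝ V)
    (P : W → W) (F : W → Wᗮ) (B : Wᗮ → W) (C : Wᗮ → Wᗮ)
    (hPdef : ∀ x : W, P x = Submodule.orthogonalProjectionOnto W (J x))
    (hFdef : ∀ x : W, F x = Submodule.orthogonalProjectionOnto Wᗮ (J x))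
    (hBdef : ∀ u : Wᗮ, B u = Submodule.orthogonalProjectionOnto W (J u))
    (hCdef : ∀ u : Wᗮ, C u = Submodule.orthogonalProjectionOnto Wᗮ (J u))
    (θ : ℝ) (hθ : θ ∈ Set.Ioo 0 (Real.pi / 2))
    (hslant : ∀ x : W, P (P x) = -(Real.cos θ ^ 2) • x)
    (hFsurj : ∀ u : Wᗮ, ∃ x : W, F x = u) :
    ∀ u v : Wᗮ, ⟪C u, C v⟫ = Real.cos θ ^ 2 * ⟪u, v⟫ := by
  have hdecW : ∀ x : W, (↑(P x) : V) + ↑(F x) = J x := fun x => by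
    rw [hPdef, hFdef]
    exact W.starProjection_add_starProjection_orthogonal (J x)
  have hdecO : ∀ w : Wᗮ, (↑(B w) : V) + ↑(C w) = J w := fun w => by
    rw [hBdef, hCdef]
    exact W.starProjection_add_starProjection_orthogonal (J w)
  have hskew : ∀ x y : V, ⟪J x, y⟫ = -⟪x, J y⟫ := fun x y => by
    have h := hJinner x (J y)
    rw [hJ2, inner_neg_right] at h
    linarith
  have horth : ∀ (a : W) (b : Wᗮ), ⟪(a : V), (b : V)⟫ = 0 := fun a b =>
    Submodule.inner_right_of_mem_orthogonal a.2 b.2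
  have horth' : ∀ (b : Wᗮ) (a : W), ⟪(b : V), (a : V)⟫ = 0 := fun b a => by
    rw [real_inner_comm]; exact horth a b
  set c := Real.cos θ ^ 2 with hc
  have hJP : ∀ x y : W, ⟪J (x : V), (↑(P y) : V)⟫ = ⟪(↑(P x) : V), ↑(P y)⟫ := fun x y => by
    rw [← hdecW x, inner_add_left, horth' (F x) (P y), add_zero]
  have hPP : ∀ x y : W, ⟪(↑(P x) : V), ↑(P y)⟫ = c * ⟪(x : V), (y : V)⟫ := fun x y => by
    rw [← hJP x y, hskew, ← hdecW (P y), inner_add_right, horth x (F (P y)), add_zero,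
      hslant]
    have : ((((-c : ℝ) • y : W)) : V) = (-c : ℝ) • (y : V) := rfl
    rw [this, real_inner_smul_right]
    ring
  have hFF : ∀ x y : W, ⟪(↑(F x) : V), ↑(F y)⟫ = (1 - c) * ⟪(x : V), (y : V)⟫ := fun x y => by
    have hx : (↑(F x) : V) = J x - ↑(P x) := by rw [← hdecW x]; abel
    have hy : (↑(F y) : V) = J y - ↑(P y) := by rw [← hdecW y]; abel
    have hPJ : ⟪(↑(P x) : V), J (y : V)⟫ = ⟪(↑(P x) : V), ↑(P y)⟫ := by
      rw [real_inner_comm, hJP y x, real_inner_comm]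
    rw [hx, hy, inner_sub_left, inner_sub_right, inner_sub_right, hJinner, hJP, hPJ, hPP]
    ring
  have hCF : ∀ x : W, (↑(C (F x)) : V) = -(↑(F (P x)) : V) := fun x => by
    have h0 : ((↑(P (P x)) : V) + ↑(B (F x)) + ↑x) + ((↑(F (P x)) : V) + ↑(C (F x))) = 0 := by
      have h4 : (↑(P (P x)) : V) + ↑(F (P x)) + ((↑(B (F x)) : V) + ↑(C (F x))) = -↑x := by
        rw [hdecW (P x), hdecO (F x), ← map_add, hdecW x, hJ2]
      calc ((↑(P (P x)) : V) + ↑(B (F x)) + ↑x) + ((↑(F (P x)) : V) + ↑(C (F x)))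
          = ((↑(P (P x)) : V) + ↑(F (P x)) + ((↑(B (F x)) : V) + ↑(C (F x)))) + ↑x := by abel
        _ = -↑x + ↑x := by rw [h4]
        _ = 0 := by abel
    set a : V := (↑(P (P x)) : V) + ↑(B (F x)) + ↑x with ha
    set b : V := (↑(F (P x)) : V) + ↑(C (F x)) with hb
    have haW : a ∈ W := by
      apply W.add_mem (W.add_mem (P (P x)).2 (B (F x)).2) x.2
    have hbO : b ∈ Wᗮ := Wᗮ.add_mem (F (P x)).2 (C (F x)).2
    have hb0 : b = 0 := by
      have hba : b = -a := by rw [ha]; rw [ha] at h0; linear_combination (norm := abel) h0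
      have : ⟪b, b⟫ = 0 := by
        nth_rewrite 1 [hba]
        rw [inner_neg_left, Submodule.inner_right_of_mem_orthogonal haW hbO, neg_zero]
      exact inner_self_eq_zero.mp this
    have : (↑(C (F x)) : V) = b - ↑(F (P x)) := by rw [hb]; abel
    rw [this, hb0, zero_sub]
  intro u v
  obtain ⟨x, hx⟩ := hFsurj u
  obtain ⟨y, hy⟩ := hFsurj v
  subst hx hy
  rw [Submodule.coe_inner, Submodule.coe_inner, hCF, hCF, inner_neg_neg, hFF, hPP, hFF]
  ring
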